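/- arXiv:2407.06676 — 4 statements merged into one kernel-verified Lean document; each statement's English description precedes it below -/
import Mathlib

section
/- Let $(Z_t)_{t \geq 0}$ be a homogeneous Markov chain with values in $[1,\infty)$ on a filtered probability space, and $M_0 > 0$ such that the stopped process $Z_{t \wedge \tau}$, with $\tau = \inf\{t : Z_t < M_0\}$, is a nonnegative supermartingale from any starting point. Suppose moreover $\mathbb{P}_z(\tau = \infty,\ \lim_t Z_t = \infty) = 0$ for every starting point $z$. Then for every starting point, $\mathbb{P}(\lim_{t\to\infty} Z_t = \infty) = 0$. -/
open Filter MeasureTheory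

/-- a homogeneous Markov chain with values in `[1,∞)`
(canonically realized on trajectory space `ℕ → ℝ`, `Z t ω = ω t`) whose
process stopped below the threshold `M₀` is a nonnegative supermartingale
from every starting point, and which from every starting point cannot
diverge to `∞` while staying above `M₀` forever, satisfies
`ℙ_z(lim Z_t = ∞) = 0` for every starting point `z`. -/
theorem stmt_6 (P : ℝ → Measure (ℕ → ℝ)) (hP : ∀ z, IsProbabilityMeasure (P z))
    (hval : ∀ z, ∀ᵐ ω ∂P z, ∀ t, 1 ≤ ω t)
    (M₀ : ℝ) (hM₀ : 0 < M₀)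
    (ℱ : Filtration ℕ (inferInstance : MeasurableSpace (ℕ → ℝ)))
    (hℱ : ∀ t, ℱ t =
      MeasurableSpace.comap (fun (ω : ℕ → ℝ) (k : Fin (t + 1)) => ω k)
        inferInstance)
    (τ : (ℕ → ℝ) → ℕ∞)
    (hτ : ∀ ω, τ ω = ⨅ (t : ℕ) (_ : ω t < M₀), (t : ℕ∞))
    (Zhat : ℕ → (ℕ → ℝ) → ℝ)
    (hZhat : ∀ t ω, Zhat t ω = ω ((min (t : ℕ∞) (τ ω)).toNat))
    (hsup : ∀ z, Supermartingale Zhat ℱ (P z))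
    (hnoesc : ∀ z,
      P z {ω | τ ω = ⊤ ∧ Tendsto (fun t => ω t) atTop atTop} = 0)
    -- homogeneous (weak) Markov property at every deterministic time
    (hMarkov : ∀ z (t₀ : ℕ) (S : Set (ℕ → ℝ)), MeasurableSet S →
      P z {ω | (fun n => ω (n + t₀)) ∈ S} = ∫⁻ ω, P (ω t₀) S ∂P z) :
    ∀ z, P z {ω | Tendsto (fun t => ω t) atTop atTop} = 0 := by
  intro z
  set S : Set (ℕ → ℝ) :=
    {ω | (∀ n, ¬ ω n < M₀) ∧ Tendsto (fun t => ω t) atTop atTop} with hS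
  -- S is measurable
  have hSmeas : MeasurableSet S := by
    have h1 : MeasurableSet {ω : ℕ → ℝ | ∀ n, ¬ ω n < M₀} := by
      rw [show {ω : ℕ → ℝ | ∀ n, ¬ ω n < M₀} = ⋂ n, {ω : ℕ → ℝ | M₀ ≤ ω n} by
        ext ω; simp [not_lt]]
      exact MeasurableSet.iInter fun n =>
        measurableSet_le measurable_const (measurable_pi_apply n)
    have h2 : {ω : ℕ → ℝ | Tendsto (fun t => ω t) atTop atTop}
        = ⋂ (b : ℕ), ⋃ (N : ℕ), ⋂ (n : ℕ), {ω : ℕ → ℝ | N ≤ n → (b : ℝ) ≤ ω n} := by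
      ext ω
      simp only [Set.mem_setOf_eq, Set.mem_iInter, Set.mem_iUnion]
      constructor
      · intro h b
        obtain ⟨N, hN⟩ := (tendsto_atTop.1 h (b : ℝ)).exists_forall_of_atTop
        exact ⟨N, fun n hn => hN n hn⟩
      · intro h
        refine tendsto_atTop_atTop.2 fun b => ?_
        obtain ⟨k, hk⟩ := exists_nat_ge b
        obtain ⟨N, hN⟩ := h k
        exact ⟨N, fun n hn => hk.trans (hN n hn)⟩
    have h3 : MeasurableSet {ω : ℕ → ℝ | Tendsto (fun t => ω t) atTop atTop} := by
      rw [h2]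
      refine MeasurableSet.iInter fun b => MeasurableSet.iUnion fun N =>
        MeasurableSet.iInter fun n => ?_
      by_cases hn : N ≤ n
      · simp only [hn, forall_true_left]
        exact measurableSet_le measurable_const (measurable_pi_apply n)
      · convert MeasurableSet.univ using 1
        ext ω; simp [hn]
    exact h1.inter h3
  -- S has measure zero under every P z'
  have hS0 : ∀ z', P z' S = 0 := by
    intro z'
    have heq : S = {ω | τ ω = ⊤ ∧ Tendsto (fun t => ω t) atTop atTop} := by
      ext ω
      simp only [hS, Set.mem_setOf_eq, hτ, iInf_eq_top, and_congr_left_iff]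
      intro _
      constructor
      · intro h t ht; exact absurd ht (h t)
      · intro h t ht
        exact (ENat.coe_ne_top t) (h t ht)
    rw [heq]; exact hnoesc z'
  -- key: each shifted event has measure zero
  have hshift : ∀ t₀ : ℕ, P z {ω | (fun n => ω (n + t₀)) ∈ S} = 0 := by
    intro t₀
    rw [hMarkov z t₀ S hSmeas]
    simp [hS0]
  -- the divergence event is covered by the union of shifted events
  have hcover : {ω : ℕ → ℝ | Tendsto (fun t => ω t) atTop atTop}
      ⊆ ⋃ t₀ : ℕ, {ω | (fun n => ω (n + t₀)) ∈ S} := by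
    intro ω hω
    obtain ⟨t₀, ht₀⟩ := (tendsto_atTop.1 hω M₀).exists_forall_of_atTop
    refine Set.mem_iUnion.2 ⟨t₀, ?_, ?_⟩
    · intro n
      exact not_lt.2 (ht₀ (n + t₀) (Nat.le_add_left _ _))
    · exact hω.comp (tendsto_add_atTop_nat t₀)
  refine le_antisymm ?_ (zero_le)
  calc P z {ω | Tendsto (fun t => ω t) atTop atTop}
      ≤ P z (⋃ t₀ : ℕ, {ω | (fun n => ω (n + t₀)) ∈ S}) := measure_mono hcover
    _ = 0 := by
        refine measure_iUnion_null fun t₀ => hshift t₀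
end

section
/- In a two-player $2\times 2$ game where player 1's payoff is identically $1$, player 2's payoff is $1$ if the action profile is $(T,L)$ or $(B,R)$ and $0$ otherwise, and both players use exponential weights with uniform initial weights and learning rates $\eta_1, \eta_2 > 0$: player 1's mixed action satisfies $p_1^t(T) = p_1^t(B) = 1/2$ for all $t$, and $p_2^t(L) = \frac{1}{1 + e^{\eta_2 Z_t}}$ where $Z_t = \sum_{k=0}^{t-1}(\mathbf{1}_{a_1^k = B} - \mathbf{1}_{a_1^k = T})$ is a simple symmetric random walk on $\mathbb{Z}$; consequently $(p_2^t(L))_t$ almost surely does not converge. -/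
open Filter Finset MeasureTheory ProbabilityTheory

/-- Example 2.1: in the 2×2 game where player 1's payoff is
identically 1 and player 2's payoff is 1 on {(T,L),(B,R)} and 0 elsewhere,
with exponential weights from uniform initial weights, player 1 always plays
(1/2,1/2) (hence their realized actions are i.i.d. fair coin flips),
`p₂ᵗ(L) = 1/(1+e^{η₂ Z_t})` with `Z_t` a symmetric random walk, and
`p₂ᵗ(L)` almost surely does not converge.  `true` codes T resp. L. -/
theorem stmt_10 {Ω : Type*} {m0 : MeasurableSpace Ω} (μ : Measure Ω)
    [IsProbabilityMeasure μ]
    (η₁ η₂ : ℝ) (hη₁ : 0 < η₁) (hη₂ : 0 < η₂)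
    (u₁ u₂ : Bool → Bool → ℝ)
    (hu₁ : ∀ s t, u₁ s t = 1)
    (hu₂ : ∀ s t, u₂ s t = if s = t then (1 : ℝ) else 0)
    (a₁ a₂ : ℕ → Ω → Bool)  -- realized actions of players 1 and 2
    (hmeas : ∀ k, Measurable (a₁ k))
    -- player 1's actions are i.i.d. fair coin flips
    (hindep : iIndepFun a₁ μ)
    (hfair : ∀ k, μ (a₁ k ⁻¹' {true}) = 1 / 2)
    (p₁ p₂ : ℕ → Ω → ℝ)   -- probability of T, resp. of L
    -- exponential weights with uniform initial weights:
    (hp₁ : ∀ t ω, p₁ t ω =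
      (1 / 2) * Real.exp (η₁ * ∑ k ∈ Finset.range t, u₁ true (a₂ k ω)) /
        ((1 / 2) * Real.exp (η₁ * ∑ k ∈ Finset.range t, u₁ true (a₂ k ω)) +
         (1 / 2) * Real.exp (η₁ * ∑ k ∈ Finset.range t, u₁ false (a₂ k ω))))
    (hp₂ : ∀ t ω, p₂ t ω =
      (1 / 2) * Real.exp (η₂ * ∑ k ∈ Finset.range t, u₂ (a₁ k ω) true) /
        ((1 / 2) * Real.exp (η₂ * ∑ k ∈ Finset.range t, u₂ (a₁ k ω) true) +
         (1 / 2) * Real.exp (η₂ * ∑ k ∈ Finset.range t, u₂ (a₁ k ω) false)))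
    (Z : ℕ → Ω → ℤ)
    (hZ : ∀ t ω, Z t ω =
      ∑ k ∈ Finset.range t, (if a₁ k ω = false then (1 : ℤ) else -1)) :
    (∀ t ω, p₁ t ω = 1 / 2) ∧
    (∀ t ω, p₂ t ω = 1 / (1 + Real.exp (η₂ * (Z t ω : ℝ)))) ∧
    (∀ᵐ ω ∂μ, ¬ ∃ L : ℝ, Tendsto (fun t => p₂ t ω) atTop (nhds L)) := by
  -- the ±1 step variables
  set g : Bool → ℝ := fun b => if b = false then (1 : ℝ) else -1 with hg
  set ξ : ℕ → Ω → ℝ := fun k => g ∘ a₁ k with hξ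
  have hξ_apply : ∀ k ω, ξ k ω = if a₁ k ω = false then (1 : ℝ) else -1 := fun k ω => rfl
  have hξabs : ∀ k ω, |ξ k ω| ≤ 1 := by
    intro k ω; rw [hξ_apply]; cases a₁ k ω <;> simp
  -- part 1
  have part1 : ∀ t ω, p₁ t ω = 1 / 2 := by
    intro t ω
    rw [hp₁]
    simp only [hu₁]
    have hA : 0 < Real.exp (η₁ * ∑ k ∈ Finset.range t, (1 : ℝ)) := Real.exp_pos _
    rw [div_eq_iff (by positivity)]
    ring
  -- part 2
  have part2 : ∀ t ω, p₂ t ω = 1 / (1 + Real.exp (η₂ * (Z t ω : ℝ))) := by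
    intro t ω
    have hcast : (Z t ω : ℝ) =
        (∑ k ∈ Finset.range t, u₂ (a₁ k ω) false)
          - ∑ k ∈ Finset.range t, u₂ (a₁ k ω) true := by
      rw [hZ, ← Finset.sum_sub_distrib, Int.cast_sum]
      refine Finset.sum_congr rfl fun k _ => ?_
      rw [hu₂, hu₂]
      cases a₁ k ω <;> norm_num
    rw [hp₂, hcast, mul_sub, Real.exp_sub]
    have hB : 0 < Real.exp (η₂ * ∑ k ∈ Finset.range t, u₂ (a₁ k ω) true) := Real.exp_pos _
    have hC : 0 < Real.exp (η₂ * ∑ k ∈ Finset.range t, u₂ (a₁ k ω) false) := Real.exp_pos _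
    field_simp
  refine ⟨part1, part2, ?_⟩
  -- part 3
  have hgm : Measurable g := measurable_of_finite g
  have hξm : ∀ k, StronglyMeasurable (ξ k) :=
    fun k => (hgm.comp (hmeas k)).stronglyMeasurable
  have hξindep : iIndepFun ξ μ :=
    hindep.comp (fun _ => g) (fun _ => hgm)
  have hint : ∀ k, Integrable (ξ k) μ := by
    intro k
    refine ⟨(hξm k).aestronglyMeasurable, HasFiniteIntegral.of_bounded (C := 1) ?_⟩
    exact Eventually.of_forall fun ω => by rw [Real.norm_eq_abs]; exact hξabs k ω
  -- mean zero
  have hfalse : ∀ k, μ (a₁ k ⁻¹' {false}) = 1 / 2 := by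
    intro k
    have hset : a₁ k ⁻¹' {false} = (a₁ k ⁻¹' {true})ᶜ := by
      ext ω; simp [Set.mem_preimage]
    rw [hset, measure_compl ((hmeas k) (measurableSet_singleton true)) (measure_ne_top μ _),
      hfair, measure_univ]
    rw [ENNReal.sub_half ENNReal.one_ne_top]
  have hmean : ∀ k, ∫ ω, ξ k ω ∂μ = 0 := by
    intro k
    have hrepr : (fun ω => ξ k ω) = fun ω =>
        Set.indicator (a₁ k ⁻¹' {false}) (fun _ => (1 : ℝ)) ω
          - Set.indicator (a₁ k ⁻¹' {true}) (fun _ => (1 : ℝ)) ω := by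
      funext ω
      rw [hξ_apply]
      cases h : a₁ k ω <;> simp [Set.indicator, h]
    have hmf : MeasurableSet (a₁ k ⁻¹' {false}) := (hmeas k) (measurableSet_singleton false)
    have hmt : MeasurableSet (a₁ k ⁻¹' {true}) := (hmeas k) (measurableSet_singleton true)
    rw [hrepr, integral_sub ((integrable_const (1 : ℝ)).indicator hmf)
      ((integrable_const (1 : ℝ)).indicator hmt),
      integral_indicator_const _ hmf, integral_indicator_const _ hmt]
    simp [Measure.real, hfalse, hfair]
  -- the shifted partial-sum martingale
  set F : Filtration ℕ m0 := Filtration.natural ξ hξm with hF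
  set h : ℕ → Ω → ℝ := fun n ω => ∑ k ∈ Finset.range n, ξ (k + 1) ω with hh
  have hadp : StronglyAdapted F h := by
    intro n
    refine Finset.stronglyMeasurable_fun_sum _ fun k hk => ?_
    have hk' : k + 1 ≤ n := Finset.mem_range.mp hk
    exact ((Filtration.stronglyAdapted_natural hξm (k + 1)).mono (F.mono hk'))
  have hinth : ∀ n, Integrable (h n) μ := by
    intro n
    exact integrable_finset_sum _ fun k _ => hint (k + 1)
  have hsucc : ∀ n, h (n + 1) = h n + ξ (n + 1) := by
    intro n; funext ω; simp [hh, Finset.sum_range_succ]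
  have hmart : Martingale h F μ := by
    refine martingale_nat hadp hinth fun n => ?_
    rw [hsucc n]
    have h1 : μ[h n + ξ (n + 1)|F n] =ᵐ[μ] μ[h n|F n] + μ[ξ (n + 1)|F n] :=
      condExp_add (hinth n) (hint (n + 1)) _
    have h2 : μ[h n|F n] = h n :=
      condExp_of_stronglyMeasurable (F.le n) (hadp n) (hinth n)
    have h3 : μ[ξ (n + 1)|F n] =ᵐ[μ] fun _ => μ[ξ (n + 1)] :=
      iIndepFun.condExp_natural_ae_eq_of_lt hξm hξindep (Nat.lt_succ_self n)
    filter_upwards [h1, h3] with ω hω1 hω3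
    have : μ[ξ (n + 1)] = 0 := hmean (n + 1)
    simp only [hω1, Pi.add_apply, h2, hω3, this, add_zero]
  have hbdd : ∀ᵐ ω ∂μ, ∀ i, |h (i + 1) ω - h i ω| ≤ ((1 : NNReal) : ℝ) := by
    refine Eventually.of_forall fun ω i => ?_
    rw [hsucc i]
    simpa using hξabs (i + 1) ω
  have key1 := hmart.submartingale.bddAbove_iff_exists_tendsto hbdd
  have key2 := hmart.bddAbove_range_iff_bddBelow_range hbdd
  -- h never converges pointwise (steps of size 1)
  have noconv : ∀ ω, ¬ ∃ c, Tendsto (fun n => h n ω) atTop (nhds c) := by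
    rintro ω ⟨c, hc⟩
    have hdiff : Tendsto (fun n => h (n + 1) ω - h n ω) atTop (nhds (c - c)) :=
      (hc.comp (tendsto_add_atTop_nat 1)).sub hc
    rw [sub_self] at hdiff
    have habs : Tendsto (fun n => |h (n + 1) ω - h n ω|) atTop (nhds |0|) := hdiff.abs
    rw [abs_zero] at habs
    have hev : ∀ᶠ n in atTop, |h (n + 1) ω - h n ω| < 1 :=
      habs.eventually (gt_mem_nhds one_pos)
    obtain ⟨n, hn⟩ := hev.exists
    have : |h (n + 1) ω - h n ω| = 1 := by
      rw [hsucc n]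
      have : |ξ (n + 1) ω| = 1 := by rw [hξ_apply]; cases a₁ (n + 1) ω <;> simp
      simpa using this
    linarith [this ▸ hn]
  -- conclusion
  filter_upwards [key1, key2] with ω h1 h2
  rintro ⟨L, hL⟩
  have hnotAbove : ¬ BddAbove (Set.range fun n => h n ω) := fun hb => noconv ω (h1.mp hb)
  have hnotBelow : ¬ BddBelow (Set.range fun n => h n ω) := fun hb => noconv ω (h1.mp (h2.mpr hb))
  -- Z as real-valued sum of ξ
  have hZr : ∀ t, (Z t ω : ℝ) = ∑ k ∈ Finset.range t, ξ k ω := by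
    intro t
    rw [hZ, Int.cast_sum]
    refine Finset.sum_congr rfl fun k _ => ?_
    rw [hξ_apply]
    split <;> simp
  have hZh : ∀ n, (Z (n + 1) ω : ℝ) = ξ 0 ω + h n ω := by
    intro n
    rw [hZr, Finset.sum_range_succ']
    simp [hh, add_comm]
  -- frequently large / small values of h
  have hfreq_above : ∀ M : ℝ, ∃ᶠ n in atTop, M < h n ω := by
    intro M
    rw [Filter.frequently_atTop]
    intro N
    by_contra hcon
    push_neg at hcon
    apply hnotAbove
    have hsub : (Set.range fun n => h n ω) ⊆
        ((fun n => h n ω) '' Set.Iio N) ∪ Set.Iic M := by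
      rintro x ⟨n, rfl⟩
      by_cases hn : n < N
      · exact Or.inl ⟨n, hn, rfl⟩
      · exact Or.inr (hcon n (le_of_not_gt hn))
    exact (((Set.finite_Iio N).image _).bddAbove.union bddAbove_Iic).mono hsub
  have hfreq_below : ∀ M : ℝ, ∃ᶠ n in atTop, h n ω < M := by
    intro M
    rw [Filter.frequently_atTop]
    intro N
    by_contra hcon
    push_neg at hcon
    apply hnotBelow
    have hsub : (Set.range fun n => h n ω) ⊆
        ((fun n => h n ω) '' Set.Iio N) ∪ Set.Ici M := by
      rintro x ⟨n, rfl⟩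
      by_cases hn : n < N
      · exact Or.inl ⟨n, hn, rfl⟩
      · exact Or.inr (hcon n (le_of_not_gt hn))
    exact (((Set.finite_Iio N).image _).bddBelow.union bddBelow_Ici).mono hsub
  -- frequently p₂ is small and frequently p₂ is large
  set c₁ : ℝ := 1 / (1 + Real.exp η₂) with hc₁
  set c₂ : ℝ := 1 / (1 + Real.exp (-η₂)) with hc₂
  have hc₁c₂ : c₁ < c₂ := by
    rw [hc₁, hc₂]
    apply one_div_lt_one_div_of_lt
    · positivity
    · have : Real.exp (-η₂) < Real.exp η₂ := Real.exp_lt_exp.mpr (by linarith)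
      linarith
  have hfreq_small : ∃ᶠ t in atTop, p₂ t ω ≤ c₁ := by
    rw [Filter.frequently_atTop]
    intro N
    obtain ⟨n, hnN, hn⟩ := (Filter.frequently_atTop.mp (hfreq_above 2)) N
    refine ⟨n + 1, le_trans hnN (Nat.le_succ n), ?_⟩
    have hZt : (1 : ℝ) ≤ (Z (n + 1) ω : ℝ) := by
      rw [hZh]
      have := hξabs 0 ω
      have := abs_le.mp this
      linarith [this.1]
    rw [part2, hc₁]
    apply one_div_le_one_div_of_le
    · positivity
    · have : Real.exp η₂ ≤ Real.exp (η₂ * (Z (n + 1) ω : ℝ)) :=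
        Real.exp_le_exp.mpr (by nlinarith)
      linarith
  have hfreq_large : ∃ᶠ t in atTop, c₂ ≤ p₂ t ω := by
    rw [Filter.frequently_atTop]
    intro N
    obtain ⟨n, hnN, hn⟩ := (Filter.frequently_atTop.mp (hfreq_below (-2))) N
    refine ⟨n + 1, le_trans hnN (Nat.le_succ n), ?_⟩
    have hZt : (Z (n + 1) ω : ℝ) ≤ -1 := by
      rw [hZh]
      have := abs_le.mp (hξabs 0 ω)
      linarith [this.2]
    rw [part2, hc₂]
    apply one_div_le_one_div_of_le
    · positivity
    · have : Real.exp (η₂ * (Z (n + 1) ω : ℝ)) ≤ Real.exp (-η₂) :=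
        Real.exp_le_exp.mpr (by nlinarith)
      linarith
  -- derive the contradiction
  have hL1 : L ≤ c₁ := by
    by_contra hcon
    push_neg at hcon
    have hev : ∀ᶠ t in atTop, c₁ < p₂ t ω := hL.eventually (eventually_gt_nhds hcon)
    obtain ⟨t, hlt, hle⟩ := (hev.and_frequently hfreq_small).exists
    linarith
  have hL2 : c₂ ≤ L := by
    by_contra hcon
    push_neg at hcon
    have hev : ∀ᶠ t in atTop, p₂ t ω < c₂ := hL.eventually (eventually_lt_nhds hcon)
    obtain ⟨t, hlt, hle⟩ := (hev.and_frequently hfreq_large).exists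
    linarith
  linarith
end

section
/- Let $(p^t)_t$ be the exponential weights process in a finite game $G$ starting from $p^0$ in the interior of $\Delta$, and suppose on some event of positive probability $p^t$ converges to a limit $p$. Then on that event (up to a null set), for each player $i$ and actions $a_i, b_i$ with $p_i(a_i) > 0$, one has $u_i(b_i, p_{-i}) \leq u_i(a_i, p_{-i})$; i.e., the limit $p$ is a Nash equilibrium. -/
open Filter Finset MeasureTheory

private lemma sum_inv_sq_le (n : ℕ) :
    ∑ k ∈ Finset.range n, ((k + 1 : ℝ))⁻¹ ^ 2 ≤ 2 := by
  have h : ∀ n : ℕ, ∑ k ∈ Finset.range (n + 1), ((k + 1 : ℝ))⁻¹ ^ 2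
      ≤ 2 - ((n : ℝ) + 1)⁻¹ := by
    intro n
    induction n with
    | zero => norm_num
    | succ n ih =>
      rw [Finset.sum_range_succ]
      have hn : (0:ℝ) < (n : ℝ) + 1 := by positivity
      have hn2 : (0:ℝ) < (n : ℝ) + 2 := by positivity
      have h1 : (((n:ℝ) + 1) + 1)⁻¹ ^ 2 ≤ ((n : ℝ) + 1)⁻¹ - ((n : ℝ) + 2)⁻¹ := by
        rw [inv_sub_inv hn.ne' hn2.ne', pow_two, ← mul_inv]
        have heq : ((n:ℝ) + 2 - ((n:ℝ) + 1)) = 1 := by ring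
        rw [heq]
        rw [one_div]
        apply inv_anti₀ (by positivity)
        nlinarith
      have he : ((n:ℝ) + 1 + 1) = (n:ℝ) + 2 := by ring
      push_cast
      rw [he]
      push_cast at ih h1
      rw [he] at h1
      linarith
  cases n with
  | zero => norm_num
  | succ n =>
    have := h n
    have h2 : (0:ℝ) < ((n:ℝ)+1)⁻¹ := by positivity
    linarith

private lemma kronecker {a : ℕ → ℝ} {l : ℝ}
    (h : Tendsto (fun n : ℕ => ∑ k ∈ Finset.range n, a k / (k + 1)) atTop (nhds l)) :
    Tendsto (fun n : ℕ => (n : ℝ)⁻¹ * ∑ k ∈ Finset.range n, a k) atTop (nhds 0) := by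
  set b : ℕ → ℝ := fun n => ∑ k ∈ Finset.range n, a k / (k + 1) with hb
  have key : ∀ n : ℕ, ∑ k ∈ Finset.range n, a k
      = n * b n - ∑ k ∈ Finset.range n, b k := by
    intro n
    induction n with
    | zero => simp [b]
    | succ n ih =>
      rw [Finset.sum_range_succ, ih, Finset.sum_range_succ]
      have hbn : b (n + 1) = b n + a n / (n + 1) := by
        simp [hb, Finset.sum_range_succ]
      rw [hbn]
      have hne : ((n:ℝ) + 1) ≠ 0 := by positivity
      push_cast
      field_simp
      ring
  have h2 : Tendsto (fun n : ℕ => b n - (n : ℝ)⁻¹ * ∑ k ∈ Finset.range n, b k)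
      atTop (nhds 0) := by
    have := h.sub h.cesaro
    simpa using this
  refine h2.congr' ?_
  filter_upwards [Filter.eventually_ge_atTop 1] with n hn
  have hn' : ((n : ℝ)) ≠ 0 := by
    simpa using Nat.one_le_iff_ne_zero.mp hn
  rw [key n, mul_sub, ← mul_assoc, inv_mul_cancel₀ hn', one_mul]

private lemma mg_lln {Ω : Type*} {m0 : MeasurableSpace Ω} (μ : Measure Ω)
    [IsProbabilityMeasure μ] (ℱ : Filtration ℕ m0) (X : ℕ → Ω → ℝ) (C : ℝ)
    (hX : ∀ k, Measurable[ℱ (k + 1)] (X k)) (hbd : ∀ k ω, |X k ω| ≤ C) :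
    ∀ᵐ ω ∂μ, Tendsto
      (fun n : ℕ => (n : ℝ)⁻¹ * ∑ k ∈ Finset.range n, (X k ω - (μ[X k | ℱ k]) ω))
      atTop (nhds 0) := by
  set D : ℝ := |C| with hD
  have hbdD : ∀ k ω, |X k ω| ≤ D := fun k ω => (hbd k ω).trans (le_abs_self C)
  have hDnn : 0 ≤ D := abs_nonneg C
  -- basic measurability and integrability
  have hXm : ∀ k, Measurable (X k) := fun k => (hX k).mono (ℱ.le _) le_rfl
  have hXint : ∀ k, Integrable (X k) μ := by
    intro k
    refine ⟨(hXm k).aestronglyMeasurable, HasFiniteIntegral.of_bounded (C := D) ?_⟩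
    exact Eventually.of_forall fun ω => by simpa [Real.norm_eq_abs] using hbdD k ω
  set d : ℕ → Ω → ℝ := fun k => X k - μ[X k | ℱ k] with hd
  have hcondbd : ∀ k, ∀ᵐ ω ∂μ, |(μ[X k | ℱ k]) ω| ≤ D := by
    intro k
    have := ae_bdd_condExp_of_ae_bdd (μ := μ) (R := D.toNNReal) (f := X k) (m := ℱ k)
      (Eventually.of_forall fun ω => by
        simpa [Real.coe_toNNReal _ hDnn] using hbdD k ω)
    simpa [Real.coe_toNNReal _ hDnn] using this
  have hdint : ∀ k, Integrable (d k) μ := fun k => (hXint k).sub integrable_condExp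
  have hdbd : ∀ k, ∀ᵐ ω ∂μ, |d k ω| ≤ 2 * D := by
    intro k
    filter_upwards [hcondbd k] with ω hω
    have := hbdD k ω
    simp only [hd, Pi.sub_apply]
    calc |X k ω - (μ[X k|ℱ k]) ω| ≤ |X k ω| + |(μ[X k|ℱ k]) ω| := abs_sub _ _
    _ ≤ 2 * D := by linarith
  have hdcond : ∀ k, μ[d k | ℱ k] =ᵐ[μ] 0 := by
    intro k
    have h1 : μ[d k | ℱ k] =ᵐ[μ] μ[X k | ℱ k] - μ[μ[X k | ℱ k] | ℱ k] :=
      condExp_sub (hXint k) integrable_condExp _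
    have h2 : μ[μ[X k | ℱ k] | ℱ k] =ᵐ[μ] μ[X k | ℱ k] :=
      condExp_condExp_of_le le_rfl (ℱ.le k)
    filter_upwards [h1, h2] with ω h1 h2
    simp [h1, h2]
  -- strong measurability of d k w.r.t. ℱ (k+1)
  have hdm : ∀ k, StronglyMeasurable[ℱ (k + 1)] (d k) := by
    intro k
    exact ((hX k).stronglyMeasurable).sub
      (stronglyMeasurable_condExp.mono (ℱ.mono k.le_succ))
  -- the weighted martingale
  set W : ℕ → Ω → ℝ := fun n ω => ∑ k ∈ Finset.range n, ((k : ℝ) + 1)⁻¹ * d k ω with hW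
  have hWint : ∀ n, Integrable (W n) μ := by
    intro n
    exact integrable_finset_sum _ fun k _ => ((hdint k).const_mul _)
  have hWadp : StronglyAdapted ℱ W := by
    intro n
    refine Finset.stronglyMeasurable_fun_sum _ fun k hk => ?_
    exact (((hdm k).mono (ℱ.mono (Finset.mem_range.mp hk))).const_mul _)
  have hWmg : Martingale W ℱ μ := by
    refine martingale_nat hWadp hWint fun n => ?_
    have hsucc : W (n + 1) = W n + fun ω => ((n : ℝ) + 1)⁻¹ * d n ω := by
      funext ω; simp [hW, Finset.sum_range_succ]
    rw [hsucc]
    have h1 : μ[W n + (fun ω => ((n : ℝ) + 1)⁻¹ * d n ω) | ℱ n]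
        =ᵐ[μ] μ[W n | ℱ n] + μ[fun ω => ((n : ℝ) + 1)⁻¹ * d n ω | ℱ n] :=
      condExp_add (hWint n) ((hdint n).const_mul _) _
    have h2 : μ[W n | ℱ n] = W n :=
      condExp_of_stronglyMeasurable (ℱ.le n) (hWadp n) (hWint n)
    have h3 : μ[fun ω => ((n : ℝ) + 1)⁻¹ * d n ω | ℱ n]
        =ᵐ[μ] fun ω => ((n : ℝ) + 1)⁻¹ * (μ[d n | ℱ n]) ω := by
      have := condExp_smul (μ := μ) (m := ℱ n) (((n : ℝ) + 1)⁻¹) (d n)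
      exact this
    filter_upwards [h1, h2 ▸ h1, h3, hdcond n] with ω hω1 _ hω3 hω4
    simp only [Pi.add_apply] at hω1 ⊢
    rw [hω1, h2, hω3, hω4]
    simp
  -- orthogonality of increments
  have hprodint : ∀ j k, Integrable (fun ω => d j ω * d k ω) μ := by
    intro j k
    refine (hdint k).bdd_mul (c := 2 * D) ((hdint j).aestronglyMeasurable) ?_
    filter_upwards [hdbd j] with ω hω using by simpa [Real.norm_eq_abs] using hω
  have hortho : ∀ j k, j < k → ∫ ω, d j ω * d k ω ∂μ = 0 := by
    intro j k hjk
    have hmeas : StronglyMeasurable[ℱ k] (d j) := (hdm j).mono (ℱ.mono hjk)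
    have hpull : μ[(fun ω => d j ω * d k ω) | ℱ k] =ᵐ[μ] d j * μ[d k | ℱ k] :=
      condExp_mul_of_stronglyMeasurable_left hmeas (hprodint j k) (hdint k)
    have h0 : μ[(fun ω => d j ω * d k ω) | ℱ k] =ᵐ[μ] 0 := by
      filter_upwards [hpull, hdcond k] with ω h1 h2
      simp [h1, Pi.mul_apply, h2]
    calc ∫ ω, d j ω * d k ω ∂μ = ∫ ω, (μ[(fun ω => d j ω * d k ω) | ℱ k]) ω ∂μ :=
          (integral_condExp (ℱ.le k)).symm
      _ = 0 := by rw [integral_congr_ae h0]; simp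
  -- second moment bound
  have hsq : ∀ k, ∫ ω, d k ω * d k ω ∂μ ≤ (2 * D) ^ 2 := by
    intro k
    have : ∀ᵐ ω ∂μ, d k ω * d k ω ≤ (2 * D) ^ 2 := by
      filter_upwards [hdbd k] with ω hω
      have := abs_nonneg (d k ω)
      nlinarith [sq_abs (d k ω)]
    calc ∫ ω, d k ω * d k ω ∂μ ≤ ∫ _ω, (2 * D) ^ 2 ∂μ :=
          integral_mono_ae (hprodint k k) (integrable_const _) this
      _ = (2 * D) ^ 2 := by simp
  have hWsq : ∀ n, ∫ ω, W n ω * W n ω ∂μ ≤ (2 * D) ^ 2 * 2 := by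
    intro n
    have hexp : ∀ ω, W n ω * W n ω = ∑ j ∈ Finset.range n, ∑ k ∈ Finset.range n,
        (((j:ℝ)+1)⁻¹ * ((k:ℝ)+1)⁻¹) * (d j ω * d k ω) := by
      intro ω
      rw [hW]
      rw [Finset.sum_mul_sum]
      apply Finset.sum_congr rfl; intro j _; apply Finset.sum_congr rfl; intro k _
      ring
    have hint1 : ∀ j k : ℕ, Integrable (fun ω => (((j:ℝ)+1)⁻¹ * ((k:ℝ)+1)⁻¹) * (d j ω * d k ω)) μ :=
      fun j k => (hprodint j k).const_mul _
    calc ∫ ω, W n ω * W n ω ∂μ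
        = ∑ j ∈ Finset.range n, ∑ k ∈ Finset.range n,
            (((j:ℝ)+1)⁻¹ * ((k:ℝ)+1)⁻¹) * ∫ ω, d j ω * d k ω ∂μ := by
          rw [integral_congr_ae (Eventually.of_forall hexp)]
          rw [integral_finset_sum _ (fun j _ => integrable_finset_sum _ (fun k _ => hint1 j k))]
          apply Finset.sum_congr rfl; intro j _
          rw [integral_finset_sum _ (fun k _ => hint1 j k)]
          apply Finset.sum_congr rfl; intro k _
          exact integral_const_mul _ _
      _ = ∑ j ∈ Finset.range n, (((j:ℝ)+1)⁻¹)^2 * ∫ ω, d j ω * d j ω ∂μ := by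
          apply Finset.sum_congr rfl; intro j hj
          rw [Finset.sum_eq_single j]
          · rw [pow_two]
          · intro k hk hkj
            rcases lt_or_gt_of_ne hkj with h | h
            · rw [show ∫ ω, d j ω * d k ω ∂μ = 0 from by
                rw [integral_congr_ae (Eventually.of_forall (fun ω => mul_comm (d j ω) (d k ω)))]
                exact hortho k j h]
              ring
            · rw [hortho j k h]; ring
          · intro hj'; exact absurd hj hj'
      _ ≤ ∑ j ∈ Finset.range n, (((j:ℝ)+1)⁻¹)^2 * (2 * D) ^ 2 := by
          apply Finset.sum_le_sum; intro j _
          have h1 : (0:ℝ) ≤ (((j:ℝ)+1)⁻¹)^2 := by positivity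
          exact mul_le_mul_of_nonneg_left (hsq j) h1
      _ = (2 * D) ^ 2 * ∑ j ∈ Finset.range n, (((j:ℝ)+1)⁻¹)^2 := by
          rw [Finset.mul_sum]; apply Finset.sum_congr rfl; intro j _; ring
      _ ≤ (2 * D) ^ 2 * 2 := by
          have := sum_inv_sq_le n
          have h2 : (0:ℝ) ≤ (2*D)^2 := by positivity
          exact mul_le_mul_of_nonneg_left (by simpa using this) h2
  -- L¹ bound
  have hWL1 : ∀ n, eLpNorm (W n) 1 μ ≤ ENNReal.ofReal (1 + (2 * D) ^ 2 * 2) := by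
    intro n
    have habs : ∫ ω, ‖W n ω‖ ∂μ ≤ 1 + (2 * D) ^ 2 * 2 := by
      have h1 : ∀ ω, ‖W n ω‖ ≤ 1 + W n ω * W n ω := by
        intro ω
        rw [Real.norm_eq_abs]
        nlinarith [sq_abs (W n ω), abs_nonneg (W n ω), sq_nonneg (|W n ω| - 1)]
      have hWsqint : Integrable (fun ω => W n ω * W n ω) μ := by
        have : (fun ω => W n ω * W n ω) = fun ω => ∑ j ∈ Finset.range n, ∑ k ∈ Finset.range n,
            (((j:ℝ)+1)⁻¹ * ((k:ℝ)+1)⁻¹) * (d j ω * d k ω) := by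
          funext ω
          rw [hW, Finset.sum_mul_sum]
          apply Finset.sum_congr rfl; intro j _; apply Finset.sum_congr rfl; intro k _; ring
        rw [this]
        exact integrable_finset_sum _ (fun j _ => integrable_finset_sum _
          (fun k _ => (hprodint j k).const_mul _))
      calc ∫ ω, ‖W n ω‖ ∂μ ≤ ∫ ω, (1 + W n ω * W n ω) ∂μ :=
            integral_mono_ae (hWint n).norm ((integrable_const 1).add hWsqint)
              (Eventually.of_forall h1)
        _ = 1 + ∫ ω, W n ω * W n ω ∂μ := by
            rw [integral_add (integrable_const 1) hWsqint]; simp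
        _ ≤ 1 + (2 * D) ^ 2 * 2 := by linarith [hWsq n]
    rw [eLpNorm_one_eq_lintegral_enorm,
      ← ofReal_integral_norm_eq_lintegral_enorm (hWint n)]
    exact ENNReal.ofReal_le_ofReal habs
  -- a.e. convergence of the martingale
  have hconv := hWmg.submartingale.ae_tendsto_limitProcess hWL1
  filter_upwards [hconv] with ω hω
  have : Tendsto (fun n : ℕ => ∑ k ∈ Finset.range n, (fun k => d k ω) k / ((k:ℝ) + 1))
      atTop (nhds (ℱ.limitProcess W μ ω)) := by
    refine hω.congr fun n => ?_
    apply Finset.sum_congr rfl; intro k _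
    rw [div_eq_inv_mul]
  have hk := kronecker this
  refine hk.congr fun n => ?_
  rfl
private lemma sum_prod_update {N : Type*} [Fintype N] [DecidableEq N]
    {A : N → Type*} [∀ i, Fintype (A i)] [∀ i, DecidableEq (A i)]
    (q : ∀ j, A j → ℝ) (i : N) (hq : ∑ x, q i x = 1) (b : A i) (f : (∀ j, A j) → ℝ) :
    ∑ c : ∀ j, A j, (∏ j, q j (c j)) * f (Function.update c i b)
      = ∑ c : ∀ j, A j,
          (∏ j, if h : j = i then (if c j = h ▸ b then (1:ℝ) else 0) else q j (c j)) * f c := by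
  classical
  rw [← Finset.sum_fiberwise_of_maps_to (g := fun c : ∀ j, A j => Function.update c i b)
      (fun c _ => Finset.mem_univ _)
      (f := fun c => (∏ j, q j (c j)) * f (Function.update c i b))]
  apply Finset.sum_congr rfl
  intro d _
  have hstep : ∀ c ∈ Finset.univ.filter (fun c : ∀ j, A j => Function.update c i b = d),
      (∏ j, q j (c j)) * f (Function.update c i b) = (∏ j, q j (c j)) * f d := by
    intro c hc; rw [(Finset.mem_filter.mp hc).2]
  rw [Finset.sum_congr rfl hstep, ← Finset.sum_mul]
  congr 1
  by_cases hdi : d i = b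
  · -- fiber in bijection with A i
    have hRHS : (∏ j, if h : j = i then (if d j = h ▸ b then (1:ℝ) else 0) else q j (d j))
        = ∏ j ∈ Finset.univ \ {i}, q j (d j) := by
      have hfun : (fun j => if h : j = i then (if d j = h ▸ b then (1:ℝ) else 0) else q j (d j))
          = Function.update (fun j => q j (d j)) i 1 := by
        funext j
        by_cases h : j = i
        · subst h; simp [hdi]
        · simp [h, Function.update_of_ne h]
      rw [hfun, Finset.prod_update_of_mem (Finset.mem_univ i)]
      rw [one_mul]
    rw [hRHS]
    have hLHS : ∑ c ∈ Finset.univ.filter (fun c : ∀ j, A j => Function.update c i b = d),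
        ∏ j, q j (c j)
        = ∑ x : A i, q i x * ∏ j ∈ Finset.univ \ {i}, q j (d j) := by
      refine Finset.sum_bij' (fun c _ => c i) (fun x _ => Function.update d i x)
        (fun c hc => Finset.mem_univ _) (fun x _ => ?_) (fun c hc => ?_) (fun x _ => ?_)
        (fun c hc => ?_)
      · -- update d i x is in the fiber
        rw [Finset.mem_filter]
        refine ⟨Finset.mem_univ _, ?_⟩
        funext j
        by_cases h : j = i
        · subst h; simp [hdi]
        · simp [Function.update_of_ne h]
      · -- left inverse
        have hc' := (Finset.mem_filter.mp hc).2
        funext j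
        show Function.update d i (c i) j = c j
        by_cases h : j = i
        · subst h; simp
        · rw [Function.update_of_ne h]
          have := congrFun hc' j
          rw [Function.update_of_ne h] at this
          exact this.symm
      · -- right inverse
        simp
      · -- values agree
        have hc' := (Finset.mem_filter.mp hc).2
        have hprod : ∏ j, q j (c j) = q i (c i) * ∏ j ∈ Finset.univ.erase i, q j (c j) :=
          (Finset.mul_prod_erase Finset.univ _ (Finset.mem_univ i)).symm
        rw [hprod, Finset.erase_eq]
        congr 1
        apply Finset.prod_congr rfl
        intro j hj
        have hji : j ≠ i := by
          rcases Finset.mem_sdiff.mp hj with ⟨_, hj2⟩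
          simpa using hj2
        have := congrFun hc' j
        rw [Function.update_of_ne hji] at this
        rw [this]
    rw [hLHS, ← Finset.sum_mul, hq, one_mul]
  · -- fiber empty, RHS product zero
    have hempty : Finset.univ.filter (fun c : ∀ j, A j => Function.update c i b = d) = ∅ := by
      apply Finset.filter_false_of_mem
      intro c _
      intro hcd
      apply hdi
      rw [← hcd]
      simp
    rw [hempty, Finset.sum_empty]
    rw [eq_comm]
    apply Finset.prod_eq_zero (Finset.mem_univ i)
    simp [hdi]
/-- part of Theorem 4.2: if the exponential weights process,
started in the interior of `Δ`, converges on an event of positive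
probability, then almost surely on that event the limit is a Nash
equilibrium. -/
theorem stmt_11 {Ω : Type*} {m0 : MeasurableSpace Ω} (μ : Measure Ω)
    [IsProbabilityMeasure μ] (ℱ : Filtration ℕ m0)
    {N : Type*} [Fintype N] [DecidableEq N]
    (A : N → Type*) [∀ i, Fintype (A i)] [∀ i, DecidableEq (A i)]
    [∀ i, MeasurableSpace (A i)] [∀ i, MeasurableSingletonClass (A i)]
    (u : ∀ i : N, (∀ j, A j) → ℝ) (η : N → ℝ) (hη : ∀ i, 0 < η i)
    (pt : ℕ → Ω → ∀ i, A i → ℝ)   -- mixed action profiles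
    (aa : ℕ → Ω → ∀ i, A i)        -- realized action profiles
    (ha : ∀ t, Measurable[ℱ (t + 1)] (aa t))
    (hpos : ∀ t ω i b, 0 < pt t ω i b)
    (hsum : ∀ t ω i, ∑ b, pt t ω i b = 1)
    -- exponential weights recurrence:
    (hEW : ∀ t ω i (b : A i),
      pt (t + 1) ω i b =
        pt t ω i b * Real.exp (η i * u i (Function.update (aa t ω) i b)) /
          ∑ c : A i,
            pt t ω i c * Real.exp (η i * u i (Function.update (aa t ω) i c)))
    -- given the past, the players draw their actions independently
    -- according to the current mixed profile:
    (hlaw : ∀ t (b : ∀ i, A i),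
      μ[({ω | aa t ω = b}).indicator (fun _ => (1 : ℝ)) | ℱ t]
        =ᵐ[μ] fun ω => ∏ i, pt t ω i (b i))
    -- expected payoff to player i of action b against the mixed profile q:
    (dev : ∀ i : N, A i → (∀ j, A j → ℝ) → ℝ)
    (hdev : ∀ i b q, dev i b q =
      ∑ a : ∀ j, A j,
        (∏ j, if h : j = i then (if a j = h ▸ b then (1:ℝ) else 0)
              else q j (a j)) * u i a)
    -- the convergence event:
    (E : Set Ω) (hE : MeasurableSet E) (hEpos : 0 < μ E)
    (p : Ω → ∀ i, A i → ℝ)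
    (hconv : ∀ ω ∈ E, ∀ i (b : A i),
      Tendsto (fun t => pt t ω i b) atTop (nhds (p ω i b))) :
    ∀ᵐ ω ∂μ, ω ∈ E →
      ∀ i (ai bi : A i), 0 < p ω i ai → dev i bi (p ω) ≤ dev i ai (p ω) := by
  classical
  -- the per-triple payoff-difference function
  set g : ∀ i : N, A i → A i → (∀ j, A j) → ℝ :=
    fun i b a c => u i (Function.update c i b) - u i (Function.update c i a) with hg
  set X : ∀ i : N, A i → A i → ℕ → Ω → ℝ :=
    fun i b a k ω => g i b a (aa k ω) with hX
  -- nonemptiness of action sets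
  have hnea : ∀ i, Nonempty (A i) := by
    intro i
    by_contra h
    rw [not_nonempty_iff] at h
    have hΩ : Nonempty Ω := MeasureTheory.Measure.nonempty_of_neZero μ
    have := hsum 0 (Classical.choice hΩ) i
    simp at this
  -- measurability of X
  have hXmeas : ∀ i (a b : A i) k, Measurable[ℱ (k + 1)] (X i b a k) := by
    intro i a b k
    exact (measurable_of_countable (g i b a)).comp (ha k)
  -- uniform bound
  have hXbd : ∀ i (a b : A i) k ω, |X i b a k ω| ≤ ∑ c : ∀ j, A j, |g i b a c| := by
    intro i a b k ω
    exact Finset.single_le_sum (f := fun c => |g i b a c|)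
      (fun c _ => abs_nonneg _) (Finset.mem_univ (aa k ω))
  -- LLN for each triple
  have hLLN : ∀ᵐ ω ∂μ, ∀ i (a b : A i), Tendsto
      (fun n : ℕ => (n : ℝ)⁻¹ * ∑ k ∈ Finset.range n,
        (X i b a k ω - (μ[X i b a k | ℱ k]) ω)) atTop (nhds 0) := by
    rw [ae_all_iff]
    intro i
    rw [ae_all_iff]
    intro a
    rw [ae_all_iff]
    intro b
    exact mg_lln μ ℱ (X i b a) _ (hXmeas i a b) (hXbd i a b)
  -- identify the conditional expectations
  have hident : ∀ i (a b : A i) (k : ℕ),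
      (μ[X i b a k | ℱ k]) =ᵐ[μ] fun ω => dev i b (pt k ω) - dev i a (pt k ω) := by
    intro i a b k
    set I : (∀ j, A j) → Ω → ℝ :=
      fun c => ({ω | aa k ω = c}).indicator (fun _ => (1 : ℝ)) with hI
    have hImeas : ∀ c, MeasurableSet {ω | aa k ω = c} := by
      intro c
      exact (ha k).mono (ℱ.le _) le_rfl (measurableSet_singleton c)
    have hIint : ∀ c : ∀ j, A j, Integrable (I c) μ :=
      fun c => (integrable_const (1:ℝ)).indicator (hImeas c)
    have hrep : X i b a k = ∑ c : ∀ j, A j, g i b a c • I c := by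
      funext ω
      have : (∑ c : ∀ j, A j, g i b a c • I c) ω
          = ∑ c : ∀ j, A j, g i b a c * I c ω := by
        simp [Finset.sum_apply]
      rw [this]
      rw [Finset.sum_eq_single (aa k ω)]
      · simp [hX, hI, Set.indicator_apply]
      · intro c _ hc
        have hmem : ¬ (aa k ω = c) := fun h => hc h.symm
        simp [hI, Set.indicator_apply, hmem]
      · intro h; exact absurd (Finset.mem_univ _) h
    have h1 : μ[X i b a k | ℱ k] =ᵐ[μ] ∑ c : ∀ j, A j, g i b a c • μ[I c | ℱ k] := by
      rw [hrep]
      refine (condExp_finsetSum (fun c _ => ((hIint c).smul (g i b a c))) _).trans ?_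
      have : ∀ c : ∀ j, A j, μ[g i b a c • I c | ℱ k] =ᵐ[μ] g i b a c • μ[I c | ℱ k] :=
        fun c => condExp_smul _ _ _
      exact eventuallyEq_sum fun c _ => this c
    have h2 : (∑ c : ∀ j, A j, g i b a c • μ[I c | ℱ k] : Ω → ℝ)
        =ᵐ[μ] fun ω => ∑ c : ∀ j, A j, g i b a c * ∏ j, pt k ω j (c j) := by
      have := fun c : ∀ j, A j => hlaw k c
      have hall : ∀ᵐ ω ∂μ, ∀ c : ∀ j, A j,
          (μ[I c | ℱ k]) ω = ∏ j, pt k ω j (c j) := by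
        rw [ae_all_iff]
        intro c
        exact hlaw k c
      filter_upwards [hall] with ω hω
      simp only [Finset.sum_apply, Pi.smul_apply, smul_eq_mul]
      exact Finset.sum_congr rfl fun c _ => by rw [hω c]
    refine (h1.trans h2).trans ?_
    apply Eventually.of_forall
    intro ω
    show (∑ c : ∀ j, A j, g i b a c * ∏ j, pt k ω j (c j))
        = dev i b (pt k ω) - dev i a (pt k ω)
    have hq := hsum k ω i
    have hupd := sum_prod_update (pt k ω) i hq
    rw [hdev i b (pt k ω), hdev i a (pt k ω)]
    rw [← hupd b (u i), ← hupd a (u i)]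
    rw [← Finset.sum_sub_distrib]
    apply Finset.sum_congr rfl
    intro c _
    simp only [hg]
    ring
  have hae2 : ∀ᵐ ω ∂μ, ∀ i (a b : A i) (k : ℕ),
      (μ[X i b a k | ℱ k]) ω = dev i b (pt k ω) - dev i a (pt k ω) := by
    rw [ae_all_iff]; intro i
    rw [ae_all_iff]; intro a
    rw [ae_all_iff]; intro b
    rw [ae_all_iff]; intro k
    exact hident i a b k
  -- the ratio formula
  have hratio : ∀ ω i (a b : A i) (t : ℕ),
      pt t ω i b / pt t ω i a
        = pt 0 ω i b / pt 0 ω i a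
            * Real.exp (η i * ∑ k ∈ Finset.range t, X i b a k ω) := by
    intro ω i a b t
    induction t with
    | zero => simp
    | succ t ih =>
      have hZ : 0 < ∑ c : A i, pt t ω i c * Real.exp (η i * u i (Function.update (aa t ω) i c)) := by
        have := hnea i
        apply Finset.sum_pos
        · intro c _
          exact mul_pos (hpos t ω i c) (Real.exp_pos _)
        · exact Finset.univ_nonempty
      have hpa : pt t ω i a ≠ 0 := (hpos t ω i a).ne'
      have hea : Real.exp (η i * u i (Function.update (aa t ω) i a)) ≠ 0 := (Real.exp_pos _).ne'
      have hXval : Real.exp (η i * X i b a t ω)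
          = Real.exp (η i * u i (Function.update (aa t ω) i b))
            / Real.exp (η i * u i (Function.update (aa t ω) i a)) := by
        rw [← Real.exp_sub]
        congr 1
        simp only [hX, hg]
        ring
      rw [Finset.sum_range_succ, mul_add, Real.exp_add, ← mul_assoc, ← ih]
      rw [hEW t ω i b, hEW t ω i a, hXval]
      have hZ' : (∑ c : A i, pt t ω i c * Real.exp (η i * u i (Function.update (aa t ω) i c))) ≠ 0 := hZ.ne'
      field_simp
  -- main argument
  filter_upwards [hLLN, hae2] with ω hω1 hω2 hωE i ai bi hpai
  -- continuity of dev along the convergence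
  have hdevconv : ∀ b : A i, Tendsto (fun t => dev i b (pt t ω)) atTop
      (nhds (dev i b (p ω))) := by
    intro b
    simp only [hdev]
    apply tendsto_finset_sum
    intro c _
    apply Tendsto.mul_const
    apply tendsto_finset_prod
    intro j _
    by_cases h : j = i
    · subst h
      simp only [dif_pos rfl]
      exact tendsto_const_nhds
    · simp only [dif_neg h]
      exact hconv ω hωE j (c j)
  set L : ℝ := dev i bi (p ω) - dev i ai (p ω) with hL
  have hYconv : Tendsto (fun k : ℕ => dev i bi (pt k ω) - dev i ai (pt k ω))
      atTop (nhds L) := (hdevconv bi).sub (hdevconv ai)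
  have hcesY := hYconv.cesaro
  have hdiff : Tendsto (fun n : ℕ => (n : ℝ)⁻¹ * ∑ k ∈ Finset.range n,
      (X i bi ai k ω - (dev i bi (pt k ω) - dev i ai (pt k ω)))) atTop (nhds 0) := by
    refine (hω1 i ai bi).congr fun n => ?_
    congr 1
    apply Finset.sum_congr rfl
    intro k _
    rw [hω2 i ai bi k]
  have hXc : Tendsto (fun n : ℕ => (n : ℝ)⁻¹ * ∑ k ∈ Finset.range n, X i bi ai k ω)
      atTop (nhds L) := by
    have := hdiff.add hcesY
    rw [zero_add] at this
    refine this.congr fun n => ?_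
    rw [← mul_add, ← Finset.sum_add_distrib]
    congr 1
    apply Finset.sum_congr rfl
    intro k _
    ring
  -- boundedness of partial sums
  have hra : Tendsto (fun t => pt t ω i bi / pt t ω i ai) atTop
      (nhds (p ω i bi / p ω i ai)) :=
    (hconv ω hωE i bi).div (hconv ω hωE i ai) hpai.ne'
  obtain ⟨M, hM⟩ := hra.bddAbove_range
  simp only [mem_upperBounds, Set.mem_range, forall_exists_index] at hM
  have hM' : ∀ t, pt t ω i bi / pt t ω i ai ≤ M := fun t => hM _ t rfl
  have hr0 : 0 < pt 0 ω i bi / pt 0 ω i ai :=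
    div_pos (hpos 0 ω i bi) (hpos 0 ω i ai)
  have hMpos : 0 < M / (pt 0 ω i bi / pt 0 ω i ai) := by
    have h0 := hM' 0
    have := hr0
    apply div_pos _ hr0
    linarith
  have hSbd : ∀ t, ∑ k ∈ Finset.range t, X i bi ai k ω
      ≤ Real.log (M / (pt 0 ω i bi / pt 0 ω i ai)) / η i := by
    intro t
    have h1 := hM' t
    rw [hratio ω i ai bi t] at h1
    have h2 : Real.exp (η i * ∑ k ∈ Finset.range t, X i bi ai k ω)
        ≤ M / (pt 0 ω i bi / pt 0 ω i ai) := by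
      rw [le_div_iff₀ hr0]
      linarith [mul_comm (pt 0 ω i bi / pt 0 ω i ai)
        (Real.exp (η i * ∑ k ∈ Finset.range t, X i bi ai k ω))]
    have h3 : η i * ∑ k ∈ Finset.range t, X i bi ai k ω
        ≤ Real.log (M / (pt 0 ω i bi / pt 0 ω i ai)) :=
      (Real.le_log_iff_exp_le hMpos).mpr h2
    exact (le_div_iff₀' (hη i)).mpr h3
  set M' : ℝ := Real.log (M / (pt 0 ω i bi / pt 0 ω i ai)) / η i with hM'def
  have htendM : Tendsto (fun n : ℕ => (n : ℝ)⁻¹ * M') atTop (nhds 0) := by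
    have h1 : Tendsto (fun n : ℕ => ((n : ℝ))⁻¹) atTop (nhds 0) :=
      tendsto_inv_atTop_zero.comp tendsto_natCast_atTop_atTop
    simpa using h1.mul_const M'
  have hfinal : L ≤ 0 := by
    refine le_of_tendsto_of_tendsto hXc htendM ?_
    filter_upwards [Filter.eventually_ge_atTop 1] with n hn
    have hninv : (0:ℝ) ≤ ((n:ℝ))⁻¹ := by positivity
    exact mul_le_mul_of_nonneg_left (hSbd n) hninv
  rw [hL] at hfinal
  linarith
end

section
/- Let $(H_t)_{t\geq 0}$ be a nondecreasing sequence of events on a filtered probability space carrying a homogeneous Markov chain $(p^t)$ with values in a set $\Delta$, let $H_\infty = \cup_t H_t$, let $K \subseteq \Delta$, and set $D = \inf_{p \in K} \mathbb{P}_p(H_\infty)$. Suppose: (i) $D > 0$; (ii) for every $p^0 \in K$ and $n_0$ with $\mathbb{P}_{p^0}(H_{n_0}) \geq D/2$, letting $\tau = \inf\{t \geq n_0 : p^t \in K\}$ one has $H_{n_0}^c = \{\tau < \infty\}$ and the strong Markov property gives $\mathbb{P}_{p^0}(H_\infty \mid \tau < \infty) \geq D$. Then $D \geq D + \frac{D}{2}(1-D)$,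 and hence $D = 1$. -/
open Filter MeasureTheory ENNReal

private lemma aux_eq {D x : ℝ≥0∞} (hD1 : D ≤ 1) (hx1 : x ≤ 1) :
    x + D * (1 - x) = D + (1 - D) * x := by
  have hDx : D * x ≠ ⊤ := by
    have : D * x ≤ 1 := by simpa using mul_le_mul' hD1 hx1
    exact (this.trans_lt ENNReal.one_lt_top).ne
  have h1 : x + D * (1 - x) + D * x = x + D := by
    rw [add_assoc, ← mul_add, tsub_add_cancel_of_le hx1, mul_one]
  have h2 : D + (1 - D) * x + D * x = D + x := by
    rw [add_assoc, ← add_mul, tsub_add_cancel_of_le hD1, one_mul]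
  have h3 : x + D * (1 - x) + D * x = D + (1 - D) * x + D * x := by
    rw [h1, h2, add_comm]
  exact WithTop.add_right_cancel hDx h3

private lemma aux_key {D x : ℝ≥0∞} (hD1 : D ≤ 1) (hx1 : x ≤ 1) (hx : D / 2 ≤ x) :
    D + D / 2 * (1 - D) ≤ x + D * (1 - x) := by
  have hhalf : D / 2 ≤ 1 := le_trans (ENNReal.half_le_self) hD1
  rw [aux_eq hD1 hx1]
  calc D + D / 2 * (1 - D) = D + (1 - D) * (D / 2) := by rw [mul_comm]
    _ ≤ D + (1 - D) * x := by gcongr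

/-- bootstrapping argument, Lemma 3.4: if from every starting
point in `K` the nondecreasing events `H_t` with union `H_∞` have probability
at least `D > 0`, and restarting the chain upon returning to `K` after a time
`n₀` at which `ℙ(H_{n₀}) ≥ D/2` yields `ℙ(H_∞ | τ < ∞) ≥ D`, then
`D ≥ D + (D/2)(1-D)` and hence `D = 1`. -/
theorem stmt_16 {Ω Δ : Type*} [MeasurableSpace Ω]
    (P : Δ → Measure Ω) (hP : ∀ p, IsProbabilityMeasure (P p))
    (pchain : ℕ → Ω → Δ)  -- the Markov chain
    (H : ℕ → Set Ω) (hmono : Monotone H)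
    (Hinf : Set Ω) (hHinf : Hinf = ⋃ t, H t)
    (hHmeas : ∀ t, MeasurableSet (H t))
    (K : Set Δ) (hKne : K.Nonempty)
    (τ : ℕ → Ω → ℕ∞)
    (hτ : ∀ n₀ ω, τ n₀ ω =
      ⨅ (t : ℕ) (_ : n₀ ≤ t) (_ : pchain t ω ∈ K), (t : ℕ∞))
    (D : ℝ≥0∞) (hD : D = ⨅ (p : Δ) (_ : p ∈ K), P p Hinf)
    (hDpos : 0 < D)
    -- hypothesis (ii): for suitable n₀, the complement of H_{n₀} is the event
    -- of returning to K after n₀, and the strong Markov property gives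
    -- ℙ(H_∞ | τ < ∞) ≥ D:
    (hii : ∀ p₀ ∈ K, ∀ n₀ : ℕ, D / 2 ≤ P p₀ (H n₀) →
      (H n₀)ᶜ = {ω | τ n₀ ω < ⊤} ∧
      D * P p₀ {ω | τ n₀ ω < ⊤} ≤ P p₀ (Hinf ∩ {ω | τ n₀ ω < ⊤})) :
    D + D / 2 * (1 - D) ≤ D ∧ D = 1 := by
  obtain ⟨p, hp⟩ := hKne
  have hD1 : D ≤ 1 := by
    have h1 : D ≤ P p Hinf := hD ▸ iInf₂_le p hp
    exact h1.trans prob_le_one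
  have hDtop : D ≠ ⊤ := (hD1.trans_lt ENNReal.one_lt_top).ne
  -- main estimate at each starting point
  have main : ∀ p₀ ∈ K, D + D / 2 * (1 - D) ≤ P p₀ Hinf := by
    intro p₀ hp₀
    have hle : D ≤ P p₀ Hinf := hD ▸ iInf₂_le p₀ hp₀
    -- find n₀ with ℙ(H n₀) ≥ D/2
    have hsup : P p₀ Hinf = ⨆ n, P p₀ (H n) := by
      rw [hHinf]; exact Directed.measure_iUnion hmono.directed_le
    have hhalf : D / 2 < D := ENNReal.half_lt_self hDpos.ne' hDtop
    obtain ⟨n₀, hn₀⟩ : ∃ n₀, D / 2 < P p₀ (H n₀) := by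
      have : D / 2 < ⨆ n, P p₀ (H n) := lt_of_lt_of_le hhalf (hsup ▸ hle)
      exact lt_iSup_iff.mp this
    obtain ⟨hcomp, hmarkov⟩ := hii p₀ hp₀ n₀ hn₀.le
    set x := P p₀ (H n₀) with hx
    have hx1 : x ≤ 1 := prob_le_one
    have hsubset : H n₀ ⊆ Hinf := hHinf ▸ Set.subset_iUnion H n₀
    have hsplit : P p₀ Hinf = x + P p₀ (Hinf ∩ (H n₀)ᶜ) := by
      have := measure_inter_add_diff (μ := P p₀) Hinf (hHmeas n₀)
      rw [Set.inter_eq_self_of_subset_right hsubset, Set.diff_eq] at this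
      exact this.symm
    have hcompl : P p₀ ((H n₀)ᶜ) = 1 - x := by
      rw [measure_compl (hHmeas n₀) (measure_ne_top _ _), measure_univ]
    calc D + D / 2 * (1 - D) ≤ x + D * (1 - x) := aux_key hD1 hx1 hn₀.le
      _ = x + D * P p₀ ((H n₀)ᶜ) := by rw [hcompl]
      _ ≤ x + P p₀ (Hinf ∩ (H n₀)ᶜ) := by
          gcongr
          rw [hcomp]
          exact hmarkov
      _ = P p₀ Hinf := hsplit.symm
  have h1 : D + D / 2 * (1 - D) ≤ D :=
    calc D + D / 2 * (1 - D) ≤ ⨅ (p : Δ) (_ : p ∈ K), P p Hinf :=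
          le_iInf₂ fun p₀ hp₀ => main p₀ hp₀
      _ = D := hD.symm
  refine ⟨h1, ?_⟩
  have h2 : D / 2 * (1 - D) ≤ 0 := by
    exact ENNReal.le_of_add_le_add_left hDtop (by rw [add_zero]; exact h1)
  have h3 : D / 2 * (1 - D) = 0 := le_antisymm h2 zero_le
  rcases mul_eq_zero.mp h3 with h | h
  · exact absurd h (by simpa [ENNReal.div_eq_zero_iff] using hDpos.ne')
  · exact le_antisymm hD1 (tsub_eq_zero_iff_le.mp h)
end
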